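/- Assume Q_n has n pairwise distinct roots z_0, …, z_{n−1}, and let T be the n×n matrix with entries T[i,j] = Q_i(z_j) (0 ≤ i, j ≤ n−1). Then T is invertible and for every j, the (j,0) entry of T^{−1} equals P_n(z_j)/Q_n′(z_j). Consequently, for any s_0 ∈ ℂ, the residue ρ_j = s_0 z_j P_n(z_j)/Q_n′(z_j) of the rational function s_0 w P_n(w)/Q_n(w) at the pole z_j satisfies ρ_j = s_0 z_j (T^{−1})[j,0]. -/
import Mathlib


open Polynomial

/-- The `n × n` tridiagonal matrix `J_n` with diagonal entries `c_0, …, c_{n−1}`,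
subdiagonal entries `d_1, …, d_{n−1}` (the entry in row `i`, column `i−1` is `d_i`),
and all superdiagonal entries equal to `1`. -/
noncomputable def Jmat (n : ℕ) (c d : ℕ → ℂ) : Matrix (Fin n) (Fin n) ℂ :=
  Matrix.of fun i j =>
    if (i : ℕ) = (j : ℕ) then c i
    else if (i : ℕ) + 1 = (j : ℕ) then 1
    else if (i : ℕ) = (j : ℕ) + 1 then d i
    else 0

/-- `Q_0 = 1`, `Q_1 = w − c_0`, `Q_{l+1} = (w − c_l) Q_l − d_l Q_{l−1}`. -/
noncomputable def Qpoly (c d : ℕ → ℂ) : ℕ → Polynomial ℂ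
  | 0 => 1
  | 1 => X - C (c 0)
  | l + 2 => (X - C (c (l + 1))) * Qpoly c d (l + 1) - C (d (l + 1)) * Qpoly c d l

/-- `P_0 = 0`, `P_1 = 1`, `P_{l+1} = (w − c_l) P_l − d_l P_{l−1}`. -/
noncomputable def Ppoly (c d : ℕ → ℂ) : ℕ → Polynomial ℂ
  | 0 => 0
  | 1 => 1
  | l + 2 => (X - C (c (l + 1))) * Ppoly c d (l + 1) - C (d (l + 1)) * Ppoly c d l

lemma step_monic {m : ℕ} {p q : Polynomial ℂ} (a b : ℂ)
    (hp : p.Monic) (hpd : p.natDegree = m + 1) (hq : q.natDegree ≤ m) :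
    ((X - C a) * p - C b * q).Monic ∧ ((X - C a) * p - C b * q).natDegree = m + 2 := by
  have hm : ((X - C a) * p).Monic := (monic_X_sub_C a).mul hp
  have hd : ((X - C a) * p).natDegree = m + 2 := by
    rw [(monic_X_sub_C a).natDegree_mul hp, natDegree_X_sub_C, hpd]; omega
  have hqd : (C b * q).natDegree < ((X - C a) * p).natDegree := by
    rw [hd]
    refine lt_of_le_of_lt natDegree_mul_le ?_
    simp only [natDegree_C, zero_add]
    omega
  refine ⟨hm.sub_of_left (degree_lt_degree hqd), ?_⟩
  rw [natDegree_sub_eq_left_of_natDegree_lt hqd, hd]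

lemma Qaux (c d : ℕ → ℂ) : ∀ l, (Qpoly c d l).Monic ∧ (Qpoly c d l).natDegree = l := by
  intro l
  induction l using Nat.strong_induction_on with
  | _ l ih =>
    match l with
    | 0 => exact ⟨monic_one, natDegree_one⟩
    | 1 => exact ⟨monic_X_sub_C _, natDegree_X_sub_C _⟩
    | (l + 2) =>
      obtain ⟨h1, h1d⟩ := ih (l + 1) (by omega)
      obtain ⟨_, h0d⟩ := ih l (by omega)
      exact step_monic _ _ h1 h1d (le_of_eq h0d)

lemma Paux (c d : ℕ → ℂ) : ∀ l, (Ppoly c d (l + 1)).Monic ∧ (Ppoly c d (l + 1)).natDegree = l := by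
  intro l
  induction l using Nat.strong_induction_on with
  | _ l ih =>
    match l with
    | 0 => exact ⟨monic_one, natDegree_one⟩
    | 1 =>
      have : Ppoly c d 2 = X - C (c 1) := by
        show (X - C (c 1)) * Ppoly c d 1 - C (d 1) * Ppoly c d 0 = _
        show (X - C (c 1)) * 1 - C (d 1) * 0 = _
        ring
      rw [this]
      exact ⟨monic_X_sub_C _, natDegree_X_sub_C _⟩
    | (l + 2) =>
      obtain ⟨h1, h1d⟩ := ih (l + 1) (by omega)
      obtain ⟨_, h0d⟩ := ih l (by omega)
      exact step_monic _ _ h1 h1d (by omega)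

lemma W_rec (c d : ℕ → ℂ) (i l : ℕ) :
    Qpoly c d i * Ppoly c d (l + 2) - Ppoly c d i * Qpoly c d (l + 2)
      = (X - C (c (l + 1))) * (Qpoly c d i * Ppoly c d (l + 1) - Ppoly c d i * Qpoly c d (l + 1))
        - C (d (l + 1)) * (Qpoly c d i * Ppoly c d l - Ppoly c d i * Qpoly c d l) := by
  show Qpoly c d i * ((X - C (c (l + 1))) * Ppoly c d (l + 1) - C (d (l + 1)) * Ppoly c d l)
      - Ppoly c d i * ((X - C (c (l + 1))) * Qpoly c d (l + 1) - C (d (l + 1)) * Qpoly c d l) = _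
  ring

lemma W_const (c d : ℕ → ℂ) :
    ∀ i, ∃ a : ℂ, Qpoly c d i * Ppoly c d (i + 1) - Ppoly c d i * Qpoly c d (i + 1) = C a := by
  intro i
  induction i with
  | zero => exact ⟨1, by simp [Qpoly, Ppoly]⟩
  | succ i ih =>
    obtain ⟨a, ha⟩ := ih
    refine ⟨d (i + 1) * a, ?_⟩
    have h : Qpoly c d (i + 1) * Ppoly c d (i + 2) - Ppoly c d (i + 1) * Qpoly c d (i + 2)
        = C (d (i + 1)) * (Qpoly c d i * Ppoly c d (i + 1) - Ppoly c d i * Qpoly c d (i + 1)) := by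
      show Qpoly c d (i + 1) * ((X - C (c (i + 1))) * Ppoly c d (i + 1) - C (d (i + 1)) * Ppoly c d i)
          - Ppoly c d (i + 1) * ((X - C (c (i + 1))) * Qpoly c d (i + 1) - C (d (i + 1)) * Qpoly c d i) = _
      ring
    rw [h, ha, ← C_mul]

lemma deg_bound {m : ℕ} (a b : ℂ) {p q : Polynomial ℂ}
    (hp : p.natDegree ≤ m) (hq : q.natDegree ≤ m + 1) :
    ((X - C a) * p - C b * q).natDegree ≤ m + 1 := by
  refine le_trans (natDegree_sub_le _ _) (max_le ?_ ?_)
  · refine le_trans natDegree_mul_le ?_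
    rw [natDegree_X_sub_C]
    omega
  · refine le_trans natDegree_mul_le ?_
    rw [natDegree_C]
    omega

lemma W_deg (c d : ℕ → ℂ) (i : ℕ) :
    ∀ t, (Qpoly c d i * Ppoly c d (i + 1 + t) - Ppoly c d i * Qpoly c d (i + 1 + t)).natDegree ≤ t := by
  intro t
  induction t using Nat.strong_induction_on with
  | _ t ih =>
    match t with
    | 0 =>
      obtain ⟨a, ha⟩ := W_const c d i
      rw [show i + 1 + 0 = i + 1 from rfl, ha, natDegree_C]
    | 1 =>
      rw [show i + 1 + 1 = i + 2 from rfl, W_rec c d i i]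
      have h0 : Qpoly c d i * Ppoly c d i - Ppoly c d i * Qpoly c d i = 0 := by ring
      obtain ⟨a, ha⟩ := W_const c d i
      rw [h0, ha, mul_zero, sub_zero]
      refine le_trans natDegree_mul_le ?_
      rw [natDegree_X_sub_C, natDegree_C]
    | (t + 2) =>
      rw [show i + 1 + (t + 2) = (i + t + 1) + 2 by omega, W_rec c d i (i + t + 1)]
      have h1 := ih (t + 1) (by omega)
      have h2 := ih t (by omega)
      rw [show i + 1 + (t + 1) = i + t + 1 + 1 by omega] at h1
      rw [show i + 1 + t = i + t + 1 by omega] at h2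
      exact deg_bound _ _ h1 (le_trans h2 (by omega))

lemma lagrange_coeff {n : ℕ} (hn : 1 ≤ n) {z : Fin n → ℂ} (hz : Function.Injective z)
    (hDne : ∀ j : Fin n, (∏ k ∈ Finset.univ.erase j, (z j - z k)) ≠ 0)
    (f : Polynomial ℂ) (hf : f.natDegree < n) :
    ∑ j, eval (z j) f / ∏ k ∈ Finset.univ.erase j, (z j - z k) = f.coeff (n - 1) := by
  classical
  set D : Fin n → ℂ := fun j => ∏ k ∈ Finset.univ.erase j, (z j - z k) with hD
  set g : Polynomial ℂ :=
    ∑ j, C (eval (z j) f / D j) * ∏ k ∈ Finset.univ.erase j, (X - C (z k)) with hg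
  have hnodal_deg : ∀ j : Fin n, (∏ k ∈ Finset.univ.erase j, (X - C (z k))).natDegree = n - 1 := by
    intro j
    rw [natDegree_prod _ _ fun k _ => X_sub_C_ne_zero (z k)]
    simp [natDegree_X_sub_C, Finset.card_erase_of_mem]
  have hgeval : ∀ m : Fin n, eval (z m) g = eval (z m) f := by
    intro m
    rw [hg, eval_finset_sum]
    rw [Finset.sum_eq_single m ?_ ?_]
    · rw [eval_mul, eval_C, eval_prod]
      simp only [eval_sub, eval_X, eval_C]
      exact div_mul_cancel₀ _ (hDne m)
    · intro j _ hjm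
      rw [eval_mul, eval_prod,
        Finset.prod_eq_zero (Finset.mem_erase.mpr ⟨Ne.symm hjm, Finset.mem_univ m⟩)
          (by simp : eval (z m) (X - C (z m)) = 0), mul_zero]
    · intro h; exact absurd (Finset.mem_univ m) h
  have hfg : f = g := by
    have h0 : f - g = 0 := by
      apply eq_zero_of_natDegree_lt_card_of_eval_eq_zero _ hz
      · intro j; rw [eval_sub, hgeval j, sub_self]
      · rw [Fintype.card_fin]
        refine lt_of_le_of_lt (natDegree_sub_le _ _) (max_lt hf ?_)
        refine lt_of_le_of_lt (natDegree_sum_le_of_forall_le _ _ ?_) (by omega : n - 1 < n)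
        intro j _
        refine le_trans natDegree_mul_le ?_
        rw [natDegree_C, hnodal_deg j]
        omega
    exact (sub_eq_zero.mp h0)
  have hcoeff : g.coeff (n - 1) = ∑ j, eval (z j) f / D j := by
    rw [hg, finset_sum_coeff]
    refine Finset.sum_congr rfl fun j _ => ?_
    have hm : (∏ k ∈ Finset.univ.erase j, (X - C (z k))).Monic :=
      monic_prod_of_monic _ _ fun k _ => monic_X_sub_C _
    rw [coeff_C_mul, ← hnodal_deg j, hm.coeff_natDegree, mul_one]
  calc ∑ j, eval (z j) f / D j = g.coeff (n - 1) := hcoeff.symm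
    _ = f.coeff (n - 1) := by rw [← hfg]

/-- Assume `Q_n` has `n` pairwise distinct roots `z_0, …, z_{n−1}` and let
`T[i,j] = Q_i(z_j)`.  Then `T` is invertible,  for every `j` the `(j,0)` entry of `T⁻¹`
equals `P_n(z_j)/Q_n′(z_j)`, and consequently for any `s_0 ∈ ℂ` the residue
`ρ_j = s_0 z_j P_n(z_j)/Q_n′(z_j)` of `s_0 w P_n(w)/Q_n(w)` at `z_j` satisfies
`ρ_j = s_0 z_j (T⁻¹)[j,0]`. -/
theorem residue_via_eigenvectors (n : ℕ) (hn : 1 ≤ n) (c d : ℕ → ℂ)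
    (z : Fin n → ℂ) (hz : Function.Injective z)
    (hroot : ∀ j, eval (z j) (Qpoly c d n) = 0) :
    IsUnit (Matrix.of fun i j : Fin n => eval (z j) (Qpoly c d i)) ∧
    (∀ j : Fin n,
      (Matrix.of fun i j : Fin n => eval (z j) (Qpoly c d i))⁻¹ j ⟨0, hn⟩
        = eval (z j) (Ppoly c d n) / eval (z j) (derivative (Qpoly c d n))) ∧
    ∀ (s0 : ℂ) (j : Fin n),
      s0 * z j * eval (z j) (Ppoly c d n) / eval (z j) (derivative (Qpoly c d n))
        = s0 * z j * (Matrix.of fun i j : Fin n => eval (z j) (Qpoly c d i))⁻¹ j ⟨0, hn⟩ := by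
  classical
  set T : Matrix (Fin n) (Fin n) ℂ :=
    Matrix.of fun i j : Fin n => eval (z j) (Qpoly c d i) with hT
  obtain ⟨hQm, hQd⟩ := Qaux c d n
  have hRm : (∏ j : Fin n, (X - C (z j))).Monic :=
    monic_prod_of_monic _ _ fun _ _ => monic_X_sub_C _
  have hRd : (∏ j : Fin n, (X - C (z j))).natDegree = n := by
    rw [natDegree_prod _ _ fun k _ => X_sub_C_ne_zero (z k)]
    simp [natDegree_X_sub_C]
  have hQn : Qpoly c d n = ∏ j : Fin n, (X - C (z j)) := by
    by_cases h0 : Qpoly c d n - ∏ j : Fin n, (X - C (z j)) = 0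
    · exact sub_eq_zero.mp h0
    · exfalso; apply h0
      apply eq_zero_of_natDegree_lt_card_of_eval_eq_zero _ hz
      · intro j
        rw [eval_sub, hroot j, eval_prod,
          Finset.prod_eq_zero (Finset.mem_univ j)
            (by simp : eval (z j) (X - C (z j)) = 0), sub_zero]
      · rw [Fintype.card_fin, natDegree_lt_iff_degree_lt h0, degree_lt_iff_coeff_zero]
        intro m hm
        have hm' : n ≤ m := by exact_mod_cast hm
        rw [coeff_sub]
        rcases eq_or_lt_of_le hm' with heq | hlt
        · have e1 : (Qpoly c d n).coeff n = 1 := by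
            have := hQm.coeff_natDegree; rwa [hQd] at this
          have e2 : (∏ j : Fin n, (X - C (z j))).coeff n = 1 := by
            have := hRm.coeff_natDegree; rwa [hRd] at this
          rw [← heq, e1, e2, sub_self]
        · rw [coeff_eq_zero_of_natDegree_lt (by omega : (Qpoly c d n).natDegree < m),
            coeff_eq_zero_of_natDegree_lt (by omega : (∏ j : Fin n, (X - C (z j))).natDegree < m),
            sub_self]
  set D : Fin n → ℂ := fun j => ∏ k ∈ Finset.univ.erase j, (z j - z k) with hDdef
  have hDne : ∀ j, D j ≠ 0 := by
    intro j
    refine Finset.prod_ne_zero_iff.mpr fun k hk => sub_ne_zero.mpr fun h => ?_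
    exact (Finset.ne_of_mem_erase hk) (hz h).symm
  have hderiv : ∀ j, eval (z j) (derivative (Qpoly c d n)) = D j := by
    intro j
    rw [hQn, ← Finset.mul_prod_erase Finset.univ _ (Finset.mem_univ j), derivative_mul,
      derivative_X_sub_C, one_mul, eval_add, eval_mul]
    simp [eval_prod, hDdef]
  have key : ∀ i : Fin n,
      ∑ j, eval (z j) (Qpoly c d i) * (eval (z j) (Ppoly c d n) / D j)
        = if (i : ℕ) = 0 then 1 else 0 := by
    intro i
    set W : Polynomial ℂ := Qpoly c d i * Ppoly c d n - Ppoly c d i * Qpoly c d n with hW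
    have hWdeg : W.natDegree ≤ n - 1 - i := by
      have h := W_deg c d i (n - 1 - i)
      rwa [show (i : ℕ) + 1 + (n - 1 - (i : ℕ)) = n by omega] at h
    have hWeval : ∀ j, eval (z j) W = eval (z j) (Qpoly c d i) * eval (z j) (Ppoly c d n) := by
      intro j; rw [hW]; simp [hroot j]
    have hsum : ∑ j, eval (z j) W / D j = W.coeff (n - 1) :=
      lagrange_coeff hn hz hDne W (by omega)
    have hL : ∑ j, eval (z j) (Qpoly c d i) * (eval (z j) (Ppoly c d n) / D j)
        = ∑ j, eval (z j) W / D j := by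
      refine Finset.sum_congr rfl fun j _ => ?_
      rw [hWeval j, mul_div_assoc]
    rw [hL, hsum]
    by_cases hi : (i : ℕ) = 0
    · rw [if_pos hi]
      have hW0 : W = Ppoly c d n := by rw [hW, hi]; simp [Qpoly, Ppoly]
      rw [hW0]
      obtain ⟨hPm, hPd⟩ := Paux c d (n - 1)
      rw [show n - 1 + 1 = n by omega] at hPm hPd
      have := hPm.coeff_natDegree; rwa [hPd] at this
    · rw [if_neg hi]
      apply coeff_eq_zero_of_natDegree_lt
      have hi' : (i : ℕ) < n := i.2
      omega
  have hdetT : T.det ≠ 0 := by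
    set A : Matrix (Fin n) (Fin n) ℂ := Matrix.of fun i k : Fin n => (Qpoly c d i).coeff k with hA
    have hTAV : T = A * (Matrix.vandermonde z).transpose := by
      ext i j
      rw [Matrix.mul_apply]
      simp only [hT, hA, Matrix.of_apply, Matrix.transpose_apply, Matrix.vandermonde_apply]
      rw [eval_eq_sum_range' (lt_of_le_of_lt (le_of_eq (Qaux c d i).2) i.2) (z j)]
      exact (Fin.sum_univ_eq_sum_range (fun k => (Qpoly c d i).coeff k * z j ^ k) n).symm
    have hAlow : A.BlockTriangular OrderDual.toDual := by
      intro i j hij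
      simp only [hA, Matrix.of_apply]
      apply coeff_eq_zero_of_natDegree_lt
      rw [(Qaux c d i).2]
      exact hij
    have hdetA : A.det = 1 := by
      rw [Matrix.det_of_lowerTriangular A hAlow]
      refine Finset.prod_eq_one fun i _ => ?_
      simp only [hA, Matrix.of_apply]
      have := (Qaux c d i).1.coeff_natDegree
      rwa [(Qaux c d i).2] at this
    rw [hTAV, Matrix.det_mul, hdetA, one_mul, Matrix.det_transpose]
    exact Matrix.det_vandermonde_ne_zero_iff.mpr hz
  have hunit : IsUnit T := (Matrix.isUnit_iff_isUnit_det T).mpr (isUnit_iff_ne_zero.mpr hdetT)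
  have hinv : ∀ j : Fin n, T⁻¹ j ⟨0, hn⟩
      = eval (z j) (Ppoly c d n) / eval (z j) (derivative (Qpoly c d n)) := by
    have hmul : T⁻¹ * T = 1 := Matrix.nonsing_inv_mul T (isUnit_iff_ne_zero.mpr hdetT)
    set x : Fin n → ℂ := fun j => eval (z j) (Ppoly c d n) / D j with hx
    have hTx : T.mulVec x = Pi.single ⟨0, hn⟩ 1 := by
      ext i
      show ∑ j, T i j * x j = _
      simp only [hT, hx, Matrix.of_apply]
      rw [key i, Pi.single_apply]
      by_cases hi : (i : ℕ) = 0
      · rw [if_pos hi, if_pos (Fin.ext hi)]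
      · rw [if_neg hi, if_neg (fun h => hi (Fin.val_eq_of_eq h))]
    have hx' : x = T⁻¹.mulVec (Pi.single ⟨0, hn⟩ 1) := by
      rw [← hTx, Matrix.mulVec_mulVec, hmul, Matrix.one_mulVec]
    intro j
    have h1 : T⁻¹.mulVec (Pi.single ⟨0, hn⟩ 1) j = T⁻¹ j ⟨0, hn⟩ := by
      rw [Matrix.mulVec_single]; exact mul_one _
    rw [← h1, ← hx', hderiv j]
  refine ⟨hunit, hinv, fun s0 j => ?_⟩
  rw [mul_div_assoc, hinv j]
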